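/- If for every weighted hexagonal graph G with all even weights there is a proper multicoloring using at most 15⌊ω(G)/12⌋ + 15 colors, then for every weighted hexagonal graph G (arbitrary weights) there is a proper multicoloring using at most 15⌊ω(G)/12⌋ + 18 colors. -/

import Mathlib

def TriLattice : SimpleGraph (ℤ × ℤ) where
  Adj u v := (v.1 - u.1, v.2 - u.2) ∈
    ({(1,0), (-1,0), (0,1), (0,-1), (1,-1), (-1,1)} : Set (ℤ × ℤ))
  symm := by
    constructor
    intro u v h
    simp only [Set.mem_insert_iff, Set.mem_singleton_iff, Prod.mk.injEq] at *
    omega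
  loopless := by
    constructor
    intro u h
    simp only [Set.mem_insert_iff, Set.mem_singleton_iff, Prod.mk.injEq] at h
    omega

instance : DecidableRel TriLattice.Adj := fun u v =>
  decidable_of_iff ((v.1 - u.1, v.2 - u.2) ∈
    ([(1,0), (-1,0), (0,1), (0,-1), (1,-1), (-1,1)] : List (ℤ × ℤ)))
    (by simp [TriLattice])

def CliqueWeightLE (d : ℤ × ℤ → ℕ) (n : ℕ) : Prop :=
  ∀ s : Finset (ℤ × ℤ), TriLattice.IsClique (s : Set (ℤ × ℤ)) → ∑ v ∈ s, d v ≤ n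

def HexColorable (d : ℤ × ℤ → ℕ) (n : ℕ) : Prop :=
  ∃ f : ℤ × ℤ → Finset (Fin n), (∀ v, d v ≤ (f v).card) ∧
    ∀ ⦃u v⦄, TriLattice.Adj u v → Disjoint (f u) (f v)

/-- From the even-weights bound 15⌊ω/12⌋+15 one gets the general bound 15⌊ω/12⌋+18. -/
theorem general_weights_multicoloring
    (H : ∀ d : ℤ × ℤ → ℕ, (Function.support d).Finite → (∀ v, Even (d v)) →
      ∀ ω : ℕ, CliqueWeightLE d ω → HexColorable d (15 * (ω / 12) + 15)) :
    ∀ d : ℤ × ℤ → ℕ, (Function.support d).Finite →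
      ∀ ω : ℕ, CliqueWeightLE d ω → HexColorable d (15 * (ω / 12) + 18) := by
  intro d hfin ω hω
  set d' : ℤ × ℤ → ℕ := fun v => 2 * (d v / 2) with hd'
  have hsupp : (Function.support d').Finite := by
    apply hfin.subset
    intro v hv
    simp only [Function.mem_support, hd'] at hv ⊢
    omega
  have heven : ∀ v, Even (d' v) := fun v => ⟨d v / 2, by simp [hd']; ring⟩
  have hω' : CliqueWeightLE d' ω := by
    intro s hs
    refine le_trans (Finset.sum_le_sum ?_) (hω s hs)
    intro v _; simp only [hd']; omega
  set N := 15 * (ω / 12) + 15 with hN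
  obtain ⟨f, hf1, hf2⟩ := H d' hsupp heven ω hω'
  have h18 : 15 * (ω / 12) + 18 = N + 3 := by omega
  rw [h18]
  have hc3 : ∀ v : ℤ × ℤ, ((v.1 + 2 * v.2) % 3).toNat < 3 := by
    intro v; omega
  set c : ℤ × ℤ → Fin (N + 3) :=
    fun v => ⟨N + ((v.1 + 2 * v.2) % 3).toNat, by have := hc3 v; omega⟩ with hc
  refine ⟨fun v => (f v).map (Fin.castAddEmb 3) ∪ (if Odd (d v) then {c v} else ∅), ?_, ?_⟩
  · intro v
    by_cases hodd : Odd (d v)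
    · simp only [hodd, if_pos]
      have hdisj : Disjoint ((f v).map (Fin.castAddEmb 3)) ({c v} : Finset (Fin (N + 3))) := by
        rw [Finset.disjoint_singleton_right]
        simp only [Finset.mem_map]
        rintro ⟨x, -, hx⟩
        have h1 : (Fin.castAddEmb 3 x : Fin (N + 3)).val = x.val := rfl
        have h2 : x.val < N := x.isLt
        have h3 : (c v).val = N + ((v.1 + 2 * v.2) % 3).toNat := rfl
        have := congrArg Fin.val hx
        omega
      rw [Finset.card_union_of_disjoint hdisj, Finset.card_map, Finset.card_singleton]
      have := hf1 v
      simp only [hd'] at this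
      omega
    · simp only [hodd, if_neg, not_false_eq_true, Finset.union_empty, Finset.card_map]
      have h1 := hf1 v
      simp only [hd'] at h1
      rw [Nat.not_odd_iff_even] at hodd
      obtain ⟨k, hk⟩ := hodd
      omega
  · intro u v huv
    have hmod : (u.1 + 2 * u.2) % 3 ≠ (v.1 + 2 * v.2) % 3 := by
      simp only [TriLattice, Set.mem_insert_iff, Set.mem_singleton_iff,
        Prod.mk.injEq] at huv
      omega
    have hmapc : ∀ w z : ℤ × ℤ,
        Disjoint ((f w).map (Fin.castAddEmb 3)) ({c z} : Finset (Fin (N + 3))) := by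
      intro w z
      rw [Finset.disjoint_singleton_right]
      simp only [Finset.mem_map]
      rintro ⟨x, -, hx⟩
      have h2 : x.val < N := x.isLt
      have := congrArg Fin.val hx
      have h3 : (c z).val = N + ((z.1 + 2 * z.2) % 3).toNat := rfl
      have h1 : (Fin.castAddEmb 3 x : Fin (N + 3)).val = x.val := rfl
      omega
    apply Finset.disjoint_union_left.2
    constructor
    · apply Finset.disjoint_union_right.2
      refine ⟨Finset.disjoint_map _ |>.2 (hf2 huv), ?_⟩
      split
      · exact hmapc u v
      · exact Finset.disjoint_empty_right _
    · apply Finset.disjoint_union_right.2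
      constructor
      · split
        · exact (hmapc v u).symm
        · exact Finset.disjoint_empty_left _
      · split
        · split
          · rw [Finset.disjoint_singleton_right, Finset.mem_singleton]
            intro h
            have := congrArg Fin.val h
            have h1 : (c u).val = N + ((u.1 + 2 * u.2) % 3).toNat := rfl
            have h2 : (c v).val = N + ((v.1 + 2 * v.2) % 3).toNat := rfl
            omega
          · exact Finset.disjoint_empty_right _
        · exact Finset.disjoint_empty_left _
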